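/- Let a > 0 and for each n ∈ ℕ define p_n := e^{−a} · Σ_{θ=0}^∞ e^{−θ} · (θ^n / n!) · (a^θ / θ!). Then p_0 = e^{−a·(1 − e^{−1})}, and for every integer n ≥ 1, p_n = (a · e^{−1} / n) · Σ_{k=0}^{n−1} (1/k!) · p_{n−1−k}. -/

import Mathlib

open scoped Nat

lemma pow_le_factorial_mul_exp (n θ : ℕ) :
    (θ : ℝ) ^ n ≤ (n ! : ℝ) * Real.exp θ := by
  have h : (θ : ℝ) ^ n / (n ! : ℝ) ≤ Real.exp θ := by
    calc (θ : ℝ) ^ n / (n ! : ℝ)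
        ≤ ∑ i ∈ Finset.range (n + 1), (θ : ℝ) ^ i / (i ! : ℝ) := by
          refine Finset.single_le_sum (f := fun i => (θ : ℝ) ^ i / (i ! : ℝ)) ?_
            (Finset.self_mem_range_succ n)
          intro i _
          positivity
      _ ≤ Real.exp θ := Real.sum_le_exp_of_nonneg (Nat.cast_nonneg θ) _
  have hn : (0 : ℝ) < (n ! : ℝ) := by exact_mod_cast n.factorial_pos
  calc (θ : ℝ) ^ n = (n ! : ℝ) * ((θ : ℝ) ^ n / (n ! : ℝ)) := by field_simp
    _ ≤ (n ! : ℝ) * Real.exp θ := by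
        exact mul_le_mul_of_nonneg_left h hn.le

lemma summ_aux (n : ℕ) (b : ℝ) (hb : 0 ≤ b) :
    Summable (fun θ : ℕ => (θ : ℝ) ^ n * b ^ θ / (θ ! : ℝ)) := by
  refine Summable.of_nonneg_of_le (fun θ => by positivity)
    (fun θ => ?_) (((Real.summable_pow_div_factorial (Real.exp 1 * b)).mul_left (n ! : ℝ)))
  have h1 : (θ : ℝ) ^ n * b ^ θ ≤ (n ! : ℝ) * Real.exp θ * b ^ θ :=
    mul_le_mul_of_nonneg_right (pow_le_factorial_mul_exp n θ) (by positivity)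
  have h2 : Real.exp (θ : ℝ) = Real.exp 1 ^ θ := by
    rw [← Real.exp_nat_mul]; ring_nf
  have hθ : (0 : ℝ) < (θ ! : ℝ) := by exact_mod_cast θ.factorial_pos
  rw [div_le_iff₀ hθ]
  calc (θ : ℝ) ^ n * b ^ θ ≤ (n ! : ℝ) * Real.exp θ * b ^ θ := h1
    _ = (n ! : ℝ) * ((Real.exp 1 * b) ^ θ) := by rw [h2, mul_pow]; ring
    _ = (n ! : ℝ) * ((Real.exp 1 * b) ^ θ / (θ ! : ℝ)) * (θ ! : ℝ) := by field_simp

theorem neyman_type_A_recursion (a : ℝ) (ha : 0 < a) (p : ℕ → ℝ)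
    (hp : ∀ n : ℕ, p n = Real.exp (-a) * ∑' θ : ℕ,
      Real.exp (-(θ : ℝ)) * ((θ : ℝ) ^ n / (n ! : ℝ)) * (a ^ θ / (θ ! : ℝ))) :
    p 0 = Real.exp (-a * (1 - Real.exp (-1)))
    ∧ ∀ n : ℕ, 1 ≤ n →
        p n = (a * Real.exp (-1) / (n : ℝ))
          * ∑ k ∈ Finset.range n, (1 / (k ! : ℝ)) * p (n - 1 - k) := by
  set b : ℝ := a * Real.exp (-1) with hbdef
  have hb : 0 < b := mul_pos ha (Real.exp_pos _)
  set q : ℕ → ℝ := fun n => ∑' θ : ℕ, (θ : ℝ) ^ n * b ^ θ / (θ ! : ℝ) with hqdef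
  have hterm : ∀ n θ : ℕ,
      Real.exp (-(θ : ℝ)) * ((θ : ℝ) ^ n / (n ! : ℝ)) * (a ^ θ / (θ ! : ℝ))
        = ((θ : ℝ) ^ n * b ^ θ / (θ ! : ℝ)) / (n ! : ℝ) := by
    intro n θ
    have h2 : Real.exp (-(θ : ℝ)) = Real.exp (-1) ^ θ := by
      rw [← Real.exp_nat_mul]; ring_nf
    rw [h2, hbdef, mul_pow]; ring
  have hpq : ∀ n : ℕ, p n = Real.exp (-a) * q n / (n ! : ℝ) := by
    intro n
    rw [hp n]
    have : (∑' θ : ℕ, Real.exp (-(θ : ℝ)) * ((θ : ℝ) ^ n / (n ! : ℝ)) * (a ^ θ / (θ ! : ℝ)))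
        = (∑' θ : ℕ, ((θ : ℝ) ^ n * b ^ θ / (θ ! : ℝ)) / (n ! : ℝ)) := by
      exact tsum_congr (hterm n)
    rw [this, tsum_div_const, hqdef, mul_div_assoc]
  have hs : ∀ n : ℕ, Summable (fun θ : ℕ => (θ : ℝ) ^ n * b ^ θ / (θ ! : ℝ)) :=
    fun n => summ_aux n b hb.le
  have hq0 : q 0 = Real.exp b := by
    rw [hqdef]
    simp only [pow_zero, one_mul]
    rw [Real.exp_eq_exp_ℝ, NormedSpace.exp_eq_tsum_div]
  have hqrec : ∀ n : ℕ, q (n + 1) = b * ∑ k ∈ Finset.range (n + 1), (n.choose k : ℝ) * q k := by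
    intro n
    have h0 : q (n + 1) = ∑' m : ℕ, ((m : ℝ) + 1) ^ (n + 1) * b ^ (m + 1) / ((m + 1)! : ℝ) := by
      simp only [hqdef]
      rw [Summable.tsum_eq_zero_add (hs (n + 1))]
      push_cast
      simp
    have h1 : ∀ m : ℕ, ((m : ℝ) + 1) ^ (n + 1) * b ^ (m + 1) / ((m + 1)! : ℝ)
        = b * ∑ k ∈ Finset.range (n + 1), (n.choose k : ℝ) * ((m : ℝ) ^ k * b ^ m / (m ! : ℝ)) := by
      intro m
      have hfac : ((m + 1)! : ℝ) = ((m : ℝ) + 1) * (m ! : ℝ) := by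
        rw [Nat.factorial_succ]; push_cast; ring
      have hpow : ((m : ℝ) + 1) ^ n = ∑ k ∈ Finset.range (n + 1), (m : ℝ) ^ k * (n.choose k : ℝ) := by
        rw [add_pow]; simp
      have hm : (0 : ℝ) < (m ! : ℝ) := by exact_mod_cast m.factorial_pos
      have hm1 : (0 : ℝ) < (m : ℝ) + 1 := by positivity
      rw [hfac, pow_succ' (((m : ℝ) + 1)) n, pow_succ]
      rw [Finset.mul_sum]
      have : ((m : ℝ) + 1) * ((m : ℝ) + 1) ^ n * (b ^ m * b) / (((m : ℝ) + 1) * (m ! : ℝ))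
          = b * (((m : ℝ) + 1) ^ n * b ^ m / (m ! : ℝ)) := by
        field_simp
      rw [this, hpow, Finset.sum_mul, Finset.sum_div, Finset.mul_sum]
      refine Finset.sum_congr rfl (fun k _ => ?_)
      ring
    rw [h0]
    rw [tsum_congr h1]
    rw [tsum_mul_left]
    congr 1
    rw [Summable.tsum_finsetSum (fun k _ => ((hs k).mul_left _))]
    exact Finset.sum_congr rfl (fun k _ => by rw [tsum_mul_left])
  have hqp : ∀ k : ℕ, q k = p k * Real.exp a * (k ! : ℝ) := by
    intro k
    have hk : (0 : ℝ) < (k ! : ℝ) := by exact_mod_cast k.factorial_pos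
    rw [hpq k]
    have hea : Real.exp (-a) * Real.exp a = 1 := by rw [← Real.exp_add]; simp
    field_simp
    linear_combination (-(q k)) * hea
  constructor
  · rw [hpq 0, hq0]
    simp only [Nat.factorial_zero, Nat.cast_one, div_one]
    rw [← Real.exp_add]
    congr 1
    rw [hbdef]; ring
  · intro n hn
    obtain ⟨m, rfl⟩ : ∃ m, n = m + 1 := ⟨n - 1, by omega⟩
    have key : p (m + 1) = (b / ((m + 1 : ℕ) : ℝ)) *
        ∑ k ∈ Finset.range (m + 1), (1 / (((m - k)! : ℕ) : ℝ)) * p k := by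
      rw [hpq (m + 1), hqrec m]
      have hea : Real.exp (-a) * Real.exp a = 1 := by
        rw [← Real.exp_add]; simp
      have hfac1 : (((m + 1)! : ℕ) : ℝ) = ((m + 1 : ℕ) : ℝ) * (m ! : ℝ) := by
        rw [Nat.factorial_succ]; push_cast; ring
      rw [Finset.mul_sum, Finset.mul_sum, Finset.sum_div, Finset.mul_sum]
      refine Finset.sum_congr rfl (fun k hk => ?_)
      rw [hqp k]
      have hkm : k ≤ m := Nat.lt_succ_iff.mp (Finset.mem_range.mp hk)
      have hid : (m.choose k : ℝ) * (k ! : ℝ) * ((m - k)! : ℝ) = (m ! : ℝ) := by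
        exact_mod_cast congrArg (Nat.cast : ℕ → ℝ)
          (Nat.choose_mul_factorial_mul_factorial hkm)
      have hmk : (0 : ℝ) < (((m - k)! : ℕ) : ℝ) := by exact_mod_cast (m - k).factorial_pos
      have hm1 : (0 : ℝ) < ((m + 1 : ℕ) : ℝ) := by exact_mod_cast Nat.succ_pos m
      have hkf : (0 : ℝ) < (k ! : ℝ) := by exact_mod_cast k.factorial_pos
      have hmf : (0 : ℝ) < (m ! : ℝ) := by exact_mod_cast m.factorial_pos
      rw [hfac1]
      field_simp
      linear_combination ((m.choose k : ℝ) * p k * (k ! : ℝ)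
          * (((m - k)! : ℕ) : ℝ)) * hea
        + (p k) * hid
    have hreflect : ∑ k ∈ Finset.range (m + 1), (1 / ((k ! : ℕ) : ℝ)) * p (m + 1 - 1 - k)
        = ∑ k ∈ Finset.range (m + 1), (1 / (((m - k)! : ℕ) : ℝ)) * p k := by
      rw [← Finset.sum_range_reflect (fun k => (1 / (((m - k)! : ℕ) : ℝ)) * p k) (m + 1)]
      refine Finset.sum_congr rfl (fun k hk => ?_)
      have hk' : k < m + 1 := Finset.mem_range.mp hk
      simp only [Nat.add_sub_cancel]
      have e1 : m - (m - k) = k := by omega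
      rw [e1]
    rw [hreflect, key]
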